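/- Assume (A2), (A4), (A5), and additionally: (b1) χ_i = χ_{i⁺} for every i ∈ Ψ; (b2) for every i ∈ Ψ there exists l ∈ Ψ with p_{l,i} + p_{l⁺,i} ≠ p_{l,i⁺} + p_{l⁺,i⁺}. Then μ is reducible if and only if p_{i,j} + p_{i,j⁺} = p_{i⁺,j} + p_{i⁺,j⁺} for every (i,j) ∈ 𝒮₂. -/

import Mathlib

open scoped Classical ENNReal
open Filter MeasureTheory

noncomputable section

namespace MTM

/-- the edge relation of the directed graph `𝒢`: `(i,j) ∈ G₂ ↔ p i j > 0`. -/
def edge (p : ℕ → ℕ → ℝ) (i j : ℕ) : Prop := 0 < p i j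

/-- product of transition weights along a word. -/
def pword (p : ℕ → ℕ → ℝ) : List ℕ → ℝ
  | [] => 1
  | [_] => 1
  | a :: b :: t => p a b * pword p (b :: t)

/-- product of contraction ratios along a word. -/
def sword (sr : ℕ → ℕ → ℝ) : List ℕ → ℝ
  | [] => 1
  | [_] => 1
  | a :: b :: t => sr a b * sword sr (b :: t)

/-- `𝒯(σ)`: all lifts of a word, each letter `i` may be replaced by `i + N`. -/
def lifts (N : ℕ) : List ℕ → Finset (List ℕ)
  | [] => {[]}
  | i :: t => (lifts N t).biUnion fun l => {i :: l, (i + N) :: l}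

/-- `Γ(σ) = G_n ∩ 𝒯(σ)`. -/
def Gam (p : ℕ → ℕ → ℝ) (N : ℕ) (σ : List ℕ) : Finset (List ℕ) :=
  (lifts N σ).filter fun τ => τ.Chain' (edge p)

/-- words over the alphabet `Ψ = {1,…,N}`. -/
def isPsiWord (N : ℕ) (σ : List ℕ) : Prop :=
  σ ≠ [] ∧ ∀ x ∈ σ, x ∈ Finset.Icc 1 N

/-- `σ ∈ 𝒮_*`: a `Ψ`-word having at least one admissible lift. -/
def isSword (p : ℕ → ℕ → ℝ) (N : ℕ) (σ : List ℕ) : Prop :=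
  isPsiWord N σ ∧ (Gam p N σ).Nonempty

/-- `σ ∈ G_*`: admissible words over `Ω = {1,…,2N}`. -/
def isGword (p : ℕ → ℕ → ℝ) (N : ℕ) (σ : List ℕ) : Prop :=
  σ ≠ [] ∧ (∀ x ∈ σ, x ∈ Finset.Icc 1 (2 * N)) ∧ σ.Chain' (edge p)

/-- `σ ∈ H₁^*`: admissible words with all letters in `Ψ`. -/
def isH1word (p : ℕ → ℕ → ℝ) (N : ℕ) (σ : List ℕ) : Prop :=
  σ ≠ [] ∧ (∀ x ∈ σ, x ∈ Finset.Icc 1 N) ∧ σ.Chain' (edge p)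

/-- `σ ∈ H₂^*`: admissible words with all letters in `Υ = {N+1,…,2N}`. -/
def isH2word (p : ℕ → ℕ → ℝ) (N : ℕ) (σ : List ℕ) : Prop :=
  σ ≠ [] ∧ (∀ x ∈ σ, x ∈ Finset.Icc (N + 1) (2 * N)) ∧ σ.Chain' (edge p)

/-- `μ(J_σ) = Σ_{σ̃ ∈ Γ(σ)} χ_{σ̃₁} p_{σ̃}`. -/
def muJ (p : ℕ → ℕ → ℝ) (χ : ℕ → ℝ) (N : ℕ) (σ : List ℕ) : ℝ :=
  ∑ τ ∈ Gam p N σ, χ (τ.headD 0) * pword p τ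

/-- `ℰ_r(σ) = μ(J_σ) s_σ^r`, with `ℰ_r(θ) = 1` for the empty word. -/
def Er (p : ℕ → ℕ → ℝ) (χ : ℕ → ℝ) (sr : ℕ → ℕ → ℝ) (N : ℕ) (r : ℝ) (σ : List ℕ) : ℝ :=
  if σ = [] then 1 else muJ p χ N σ * sword sr σ ^ r

/-- `I_{1,σ}` resp. `I_{2,σ}`: the part of `μ(J_σ)` coming from lifts ending with `i`
(resp. with `i⁺`, when applied with `i + N`). -/
def Ipart (p : ℕ → ℕ → ℝ) (χ : ℕ → ℝ) (N : ℕ) (i : ℕ) (σ : List ℕ) : ℝ :=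
  ∑ τ ∈ (Gam p N σ).filter (fun τ => τ.getLastD 0 = i), χ (τ.headD 0) * pword p τ

/-- all words of a given length over a finite alphabet. -/
def wordsOfLen (S : Finset ℕ) : ℕ → Finset (List ℕ)
  | 0 => {[]}
  | n + 1 => (wordsOfLen S n).biUnion fun l => S.image fun a => a :: l

/-- `𝒮_n` as a finite set of words. -/
def Sn (p : ℕ → ℕ → ℝ) (N n : ℕ) : Finset (List ℕ) :=
  (wordsOfLen (Finset.Icc 1 N) n).filter (isSword p N)

/-- irreducibility of the sub-matrix of `p` indexed by `S`: the corresponding directed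
graph is strongly connected. -/
def irreducibleOn (p : ℕ → ℕ → ℝ) (S : Finset ℕ) : Prop :=
  ∀ i ∈ S, ∀ j ∈ S, ∃ c : List ℕ, (∀ x ∈ c, x ∈ S) ∧ List.Chain (edge p) i (c ++ [j])

/-- Assumption (A1): `P₁, P₂` irreducible and `P₄ = 0`. -/
def A1 (p : ℕ → ℕ → ℝ) (N : ℕ) : Prop :=
  irreducibleOn p (Finset.Icc 1 N) ∧
    irreducibleOn (fun a b => p (a + N) (b + N)) (Finset.Icc 1 N) ∧
    ∀ i ∈ Finset.Icc 1 N, ∀ j ∈ Finset.Icc 1 N, p (i + N) j = 0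

/-- Assumption (A2). -/
def A2 (p : ℕ → ℕ → ℝ) (N : ℕ) : Prop :=
  ∀ i ∈ Finset.Icc 1 N,
    2 ≤ ((Finset.Icc 1 N).filter fun j => 0 < p i j).card ∧
      2 ≤ ((Finset.Icc 1 N).filter fun j => 0 < p (i + N) (j + N)).card

/-- Assumption (A3): `ℳ_{i,j} = ∅` or `ℳ_{i,j} = {(i,j),(i,j⁺),(i⁺,j⁺)}`. -/
def A3 (p : ℕ → ℕ → ℝ) (N : ℕ) : Prop :=
  ∀ i ∈ Finset.Icc 1 N, ∀ j ∈ Finset.Icc 1 N,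
    (p i j = 0 ∧ p i (j + N) = 0 ∧ p (i + N) j = 0 ∧ p (i + N) (j + N) = 0) ∨
      (0 < p i j ∧ 0 < p i (j + N) ∧ p (i + N) j = 0 ∧ 0 < p (i + N) (j + N))

/-- Assumption (A4): `ℳ_{i,j} = ∅` or `ℳ_{i,j} = 𝒩_{i,j}`. -/
def A4 (p : ℕ → ℕ → ℝ) (N : ℕ) : Prop :=
  ∀ i ∈ Finset.Icc 1 N, ∀ j ∈ Finset.Icc 1 N,
    (p i j = 0 ∧ p i (j + N) = 0 ∧ p (i + N) j = 0 ∧ p (i + N) (j + N) = 0) ∨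
      (0 < p i j ∧ 0 < p i (j + N) ∧ 0 < p (i + N) j ∧ 0 < p (i + N) (j + N))

/-- Assumption (A5): `P₁` is irreducible. -/
def A5 (p : ℕ → ℕ → ℝ) (N : ℕ) : Prop := irreducibleOn p (Finset.Icc 1 N)

/-- `T_σ = T_{σ₁σ₂} ∘ ⋯ ∘ T_{σ_{n-1}σ_n}` (identity for words of length `≤ 1`). -/
def Tword {E : Type*} (T : ℕ → ℕ → E → E) : List ℕ → E → E
  | [], x => x
  | [_], x => x
  | a :: b :: t, x => T a b (Tword T (b :: t) x)

/-- the cylinder set `J_σ = T_σ (J_{σ_n})`. -/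
def Jword {E : Type*} (T : ℕ → ℕ → E → E) (J : ℕ → Set E) (σ : List ℕ) : Set E :=
  Tword T σ '' J (σ.getLastD 0)

/-- the Mauldin–Williams fractal `K = ⋂_k ⋃_{σ ∈ G_k} J_σ`. -/
def attractor {E : Type*} (p : ℕ → ℕ → ℝ) (N : ℕ) (T : ℕ → ℕ → E → E) (J : ℕ → Set E) :
    Set E :=
  ⋂ n : ℕ, ⋃ σ ∈ {σ : List ℕ | isGword p N σ ∧ σ.length = n + 1}, Jword T J σ

/-- `μ` is reducible: `μ = ν₁ ∘ π₁⁻¹` for the Markov-type measure `ν₁` associated with some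
`N × N` row-stochastic matrix and positive probability vector; equivalently, the cylinder
values of `μ` are of Markov type. -/
def reducible {E : Type*} [MeasurableSpace E] (p : ℕ → ℕ → ℝ) (N : ℕ)
    (T : ℕ → ℕ → E → E) (J : ℕ → Set E) (μ : Measure E) : Prop :=
  ∃ (pt : ℕ → ℕ → ℝ) (χt : ℕ → ℝ),
    (∀ i ∈ Finset.Icc 1 N, ∀ j ∈ Finset.Icc 1 N, 0 ≤ pt i j) ∧
      (∀ i ∈ Finset.Icc 1 N, ∑ j ∈ Finset.Icc 1 N, pt i j = 1) ∧
      (∀ i ∈ Finset.Icc 1 N, 0 < χt i) ∧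
      (∑ i ∈ Finset.Icc 1 N, χt i = 1) ∧
      ∀ σ : List ℕ, isSword p N σ →
        μ (Jword T J σ) = ENNReal.ofReal (χt (σ.headD 0) * pword pt σ)

/-- `e^r_{k,r}(μ)`: the `k`-th quantization error of order `r`, to the `r`-th power. -/
def quantErr {E : Type*} [PseudoMetricSpace E] [MeasurableSpace E] (r : ℝ) (μ : Measure E)
    (k : ℕ) : ℝ :=
  sInf ((fun α : Set E => ∫ x, Metric.infDist x α ^ r ∂μ) ''
    {α : Set E | α.Nonempty ∧ α.Finite ∧ α.ncard ≤ k})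

/-- the upper quantization coefficient `Q̄_r^s(μ) = limsup_k k^{r/s} e^r_{k,r}(μ)`. -/
def upperQC {E : Type*} [PseudoMetricSpace E] [MeasurableSpace E] (r s : ℝ)
    (μ : Measure E) : ℝ≥0∞ :=
  limsup (fun k : ℕ => ENNReal.ofReal ((k : ℝ) ^ (r / s) * quantErr r μ k)) atTop

/-- the lower quantization coefficient `Q̲_r^s(μ)`. -/
def lowerQC {E : Type*} [PseudoMetricSpace E] [MeasurableSpace E] (r s : ℝ)
    (μ : Measure E) : ℝ≥0∞ :=
  liminf (fun k : ℕ => ENNReal.ofReal ((k : ℝ) ^ (r / s) * quantErr r μ k)) atTop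

/-- the upper quantization dimension `D̄_r(μ) = limsup_k log k / (-log e_{k,r}(μ))`. -/
def upperQD {E : Type*} [PseudoMetricSpace E] [MeasurableSpace E] (r : ℝ)
    (μ : Measure E) : ℝ :=
  limsup (fun k : ℕ => Real.log k / (-Real.log (quantErr r μ k ^ (1 / r)))) atTop

/-- the lower quantization dimension `D̲_r(μ)`. -/
def lowerQD {E : Type*} [PseudoMetricSpace E] [MeasurableSpace E] (r : ℝ)
    (μ : Measure E) : ℝ :=
  liminf (fun k : ℕ => Real.log k / (-Real.log (quantErr r μ k ^ (1 / r)))) atTop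

/-- spectral radius of a real matrix: the largest modulus of a complex eigenvalue. -/
def specRad {n : Type*} [Fintype n] [DecidableEq n] (M : Matrix n n ℝ) : ℝ :=
  sSup (norm '' spectrum ℂ (M.map (algebraMap ℝ ℂ)))

/-- `A₁(s) = ((p_{i,j} s_{i,j}^r)^s)_{i,j=1}^N`. -/
def matA1 (p sr : ℕ → ℕ → ℝ) (N : ℕ) (r s : ℝ) : Matrix (Fin N) (Fin N) ℝ :=
  Matrix.of fun i j => (p (i.1 + 1) (j.1 + 1) * sr (i.1 + 1) (j.1 + 1) ^ r) ^ s

/-- `A₂(s) = ((p_{i⁺,j⁺} s_{i⁺,j⁺}^r)^s)_{i,j=1}^N`. -/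
def matA2 (p sr : ℕ → ℕ → ℝ) (N : ℕ) (r s : ℝ) : Matrix (Fin N) (Fin N) ℝ :=
  Matrix.of fun i j => (p (i.1 + 1 + N) (j.1 + 1 + N) * sr (i.1 + 1 + N) (j.1 + 1 + N) ^ r) ^ s

/-- `A₃(s) = ((p_{i,j⁺} s_{i,j⁺}^r)^s)_{i,j=1}^N`. -/
def matA3 (p sr : ℕ → ℕ → ℝ) (N : ℕ) (r s : ℝ) : Matrix (Fin N) (Fin N) ℝ :=
  Matrix.of fun i j => (p (i.1 + 1) (j.1 + 1 + N) * sr (i.1 + 1) (j.1 + 1 + N) ^ r) ^ s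

/-- `A₄(s) = ((p_{i⁺,j} s_{i⁺,j}^r)^s)_{i,j=1}^N`. -/
def matA4 (p sr : ℕ → ℕ → ℝ) (N : ℕ) (r s : ℝ) : Matrix (Fin N) (Fin N) ℝ :=
  Matrix.of fun i j => (p (i.1 + 1 + N) (j.1 + 1) * sr (i.1 + 1 + N) (j.1 + 1) ^ r) ^ s

/-- the block matrix `A(s) = [[A₁(s), A₃(s)], [A₄(s), A₂(s)]]`. -/
def matA (p sr : ℕ → ℕ → ℝ) (N : ℕ) (r s : ℝ) :
    Matrix (Fin N ⊕ Fin N) (Fin N ⊕ Fin N) ℝ :=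
  Matrix.fromBlocks (matA1 p sr N r s) (matA3 p sr N r s) (matA4 p sr N r s) (matA2 p sr N r s)

/-- `p̲ = min_{(i,j) ∈ G₂} p_{i,j}`. -/
def pMin (p : ℕ → ℕ → ℝ) (N : ℕ) : ℝ :=
  sInf {x | ∃ i ∈ Finset.Icc 1 (2 * N), ∃ j ∈ Finset.Icc 1 (2 * N), 0 < p i j ∧ x = p i j}

/-- `p̄ = max_{(i,j) ∈ G₂} p_{i,j}`. -/
def pMax (p : ℕ → ℕ → ℝ) (N : ℕ) : ℝ :=
  sSup {x | ∃ i ∈ Finset.Icc 1 (2 * N), ∃ j ∈ Finset.Icc 1 (2 * N), 0 < p i j ∧ x = p i j}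

/-- `s̲ = min_{(i,j) ∈ 𝒮₂} s_{i,j}`. -/
def sMin (p sr : ℕ → ℕ → ℝ) (N : ℕ) : ℝ :=
  sInf {x | ∃ i ∈ Finset.Icc 1 N, ∃ j ∈ Finset.Icc 1 N, isSword p N [i, j] ∧ x = sr i j}

/-- `s̄ = max_{(i,j) ∈ 𝒮₂} s_{i,j}`. -/
def sMax (p sr : ℕ → ℕ → ℝ) (N : ℕ) : ℝ :=
  sSup {x | ∃ i ∈ Finset.Icc 1 N, ∃ j ∈ Finset.Icc 1 N, isSword p N [i, j] ∧ x = sr i j}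

/-- `χ̲ = min_{1 ≤ i ≤ 2N} χ_i`. -/
def chiMin (χ : ℕ → ℝ) (N : ℕ) : ℝ := sInf {x | ∃ i ∈ Finset.Icc 1 (2 * N), x = χ i}

/-- `χ̄ = max_{1 ≤ i ≤ 2N} χ_i`. -/
def chiMax (χ : ℕ → ℝ) (N : ℕ) : ℝ := sSup {x | ∃ i ∈ Finset.Icc 1 (2 * N), x = χ i}

/-- `t` satisfies the defining property of `t_r`:
`(1/n) log Σ_{σ ∈ 𝒮_n} ℰ_r(σ)^{t/(t+r)} → 0`. -/
def trCond (p : ℕ → ℕ → ℝ) (χ : ℕ → ℝ) (sr : ℕ → ℕ → ℝ) (N : ℕ) (r t : ℝ) : Prop :=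
  0 < t ∧
    Tendsto (fun n : ℕ => (n : ℝ)⁻¹ *
      Real.log (∑ σ ∈ Sn p N n, Er p χ sr N r σ ^ (t / (t + r)))) atTop (nhds 0)

/-- the initial word of length `n` of an infinite sequence. -/
def seqTake (x : ℕ → ℕ) (n : ℕ) : List ℕ := (List.range n).map x

/-- `Γ` is a finite maximal antichain among the words satisfying `W`, with respect to the
infinite sequences satisfying `Wseq`. -/
def isMaxAntichain (W : List ℕ → Prop) (Wseq : (ℕ → ℕ) → Prop) (Γ : Finset (List ℕ)) : Prop :=
  (∀ σ ∈ Γ, W σ) ∧ (∀ σ ∈ Γ, ∀ τ ∈ Γ, σ ≠ τ → ¬σ <+: τ) ∧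
    ∀ x : ℕ → ℕ, Wseq x → ∃ n : ℕ, 1 ≤ n ∧ seqTake x n ∈ Γ

/-- infinite admissible sequences with letters in `Ψ`. -/
def isH1seq (p : ℕ → ℕ → ℝ) (N : ℕ) (x : ℕ → ℕ) : Prop :=
  (∀ n, x n ∈ Finset.Icc 1 N) ∧ ∀ n, 0 < p (x n) (x (n + 1))

/-- infinite admissible sequences with letters in `Υ`. -/
def isH2seq (p : ℕ → ℕ → ℝ) (N : ℕ) (x : ℕ → ℕ) : Prop :=
  (∀ n, x n ∈ Finset.Icc (N + 1) (2 * N)) ∧ ∀ n, 0 < p (x n) (x (n + 1))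

/-- minimal length of a word in `Γ`. -/
def minLen (Γ : Finset (List ℕ)) : ℕ := sInf {n | ∃ σ ∈ Γ, σ.length = n}

/-- maximal length of a word in `Γ`. -/
def maxLen (Γ : Finset (List ℕ)) : ℕ := sSup {n | ∃ σ ∈ Γ, σ.length = n}

/-- `Λ_{k,r} = {σ ∈ 𝒮^* : ℰ_r(σ) < c₁^k ≤ ℰ_r(σ^♭)}`. -/
def LamSet (p : ℕ → ℕ → ℝ) (χ : ℕ → ℝ) (sr : ℕ → ℕ → ℝ) (N : ℕ) (r c1 : ℝ) (k : ℕ) :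
    Set (List ℕ) :=
  {σ | isSword p N σ ∧ Er p χ sr N r σ < c1 ^ k ∧ c1 ^ k ≤ Er p χ sr N r σ.dropLast}

/-- `ℒ(σ) = {σ, σ⁺} ∪ {σ|_h ∗ (σ_{h+1}⁺, …, σ_n⁺) : 1 ≤ h ≤ n − 1}`. -/
def Lset (N : ℕ) (σ : List ℕ) : Finset (List ℕ) :=
  (Finset.range (σ.length + 1)).image fun h =>
    σ.take h ++ (σ.drop h).map (fun x => x + N)

-- aux lemmas
@[simp] lemma pword_nil (p : ℕ → ℕ → ℝ) : pword p [] = 1 := rfl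
@[simp] lemma pword_single (p : ℕ → ℕ → ℝ) (a : ℕ) : pword p [a] = 1 := rfl
@[simp] lemma pword_cons (p : ℕ → ℕ → ℝ) (a b : ℕ) (t : List ℕ) :
    pword p (a :: b :: t) = p a b * pword p (b :: t) := rfl

lemma lifts_nil (N : ℕ) : lifts N [] = {[]} := rfl
lemma lifts_cons (N i : ℕ) (t : List ℕ) :
    lifts N (i :: t) = (lifts N t).biUnion fun l => {i :: l, (i + N) :: l} := rfl

lemma mem_lifts_cons {N i : ℕ} {t : List ℕ} {τ : List ℕ} :
    τ ∈ lifts N (i :: t) ↔ ∃ l ∈ lifts N t, τ = i :: l ∨ τ = (i + N) :: l := by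
  rw [lifts_cons]
  simp [Finset.mem_biUnion]

lemma mem_lifts_self (N : ℕ) : ∀ σ : List ℕ, σ ∈ lifts N σ := by
  intro σ
  induction σ with
  | nil => simp [lifts_nil]
  | cons a t ih => exact mem_lifts_cons.2 ⟨t, ih, Or.inl rfl⟩

lemma sum_lifts_cons {N : ℕ} (hN : 0 < N) (i : ℕ) (t : List ℕ) (f : List ℕ → ℝ) :
    ∑ τ ∈ lifts N (i :: t), f τ = ∑ l ∈ lifts N t, (f (i :: l) + f ((i + N) :: l)) := by
  rw [lifts_cons, Finset.sum_biUnion]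
  · refine Finset.sum_congr rfl fun l _ => ?_
    rw [Finset.sum_pair]
    intro h
    have : i = i + N := (List.cons.injEq _ _ _ _ ▸ congrArg id h : _ ∧ _).1
    omega
  · intro x hx y hy hxy
    simp only [Finset.disjoint_left, Finset.mem_insert, Finset.mem_singleton]
    rintro z (rfl | rfl) (h | h) <;> exact hxy (by simpa using congrArg List.tail h)

def Gs (p : ℕ → ℕ → ℝ) (N a : ℕ) (t : List ℕ) : ℝ :=
  ∑ l ∈ lifts N t, if (a :: l).Chain' (edge p) then pword p (a :: l) else 0

lemma Gs_nil (p : ℕ → ℕ → ℝ) (N a : ℕ) : Gs p N a [] = 1 := by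
  simp [Gs, lifts_nil]
  exact List.isChain_singleton a

lemma ite_chain_cons (p : ℕ → ℕ → ℝ) (hp0 : ∀ i j, 0 ≤ p i j) (a b : ℕ) (l : List ℕ) :
    (if (a :: b :: l).Chain' (edge p) then pword p (a :: b :: l) else 0)
      = p a b * (if (b :: l).Chain' (edge p) then pword p (b :: l) else 0) := by
  by_cases hc : (b :: l).Chain' (edge p)
  · by_cases h : 0 < p a b
    · have hh : (a :: b :: l).Chain' (edge p) := List.isChain_cons_cons.mpr ⟨h, hc⟩
      rw [if_pos hh, if_pos hc, pword_cons]
    · have h0 : p a b = 0 := le_antisymm (not_lt.mp h) (hp0 a b)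
      have hh : ¬(a :: b :: l).Chain' (edge p) := fun hh => h (List.isChain_cons_cons.mp hh).1
      rw [if_neg hh, if_pos hc, h0, zero_mul]
  · have hh : ¬(a :: b :: l).Chain' (edge p) := fun hh => hc (List.isChain_cons_cons.mp hh).2
    rw [if_neg hh, if_neg hc, mul_zero]

lemma Gs_cons {p : ℕ → ℕ → ℝ} {N : ℕ} (hN : 0 < N) (hp0 : ∀ i j, 0 ≤ p i j)
    (a j : ℕ) (t : List ℕ) :
    Gs p N a (j :: t) = p a j * Gs p N j t + p a (j + N) * Gs p N (j + N) t := by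
  unfold Gs
  rw [sum_lifts_cons hN, Finset.mul_sum, Finset.mul_sum, ← Finset.sum_add_distrib]
  refine Finset.sum_congr rfl fun l _ => ?_
  rw [ite_chain_cons p hp0 a j l, ite_chain_cons p hp0 a (j + N) l]

lemma muJ_cons {p : ℕ → ℕ → ℝ} {χ : ℕ → ℝ} {N : ℕ} (hN : 0 < N) (i : ℕ) (t : List ℕ) :
    muJ p χ N (i :: t) = χ i * Gs p N i t + χ (i + N) * Gs p N (i + N) t := by
  unfold muJ Gam
  rw [Finset.sum_filter, sum_lifts_cons hN]
  unfold Gs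
  rw [Finset.mul_sum, Finset.mul_sum, ← Finset.sum_add_distrib]
  refine Finset.sum_congr rfl fun l _ => ?_
  simp only [List.headD_cons]
  split_ifs <;> ring

lemma isSword_mk {p : ℕ → ℕ → ℝ} {N : ℕ} {σ : List ℕ} (hne : σ ≠ [])
    (hmem : ∀ x ∈ σ, x ∈ Finset.Icc 1 N) (hch : σ.Chain' (edge p)) : isSword p N σ :=
  ⟨⟨hne, hmem⟩, ⟨σ, Finset.mem_filter.2 ⟨mem_lifts_self N σ, hch⟩⟩⟩

/-- extract positivity chain on the base word from an admissible lift. -/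
lemma chain_of_lift {p : ℕ → ℕ → ℝ} {N : ℕ}
    (hdown : ∀ i ∈ Finset.Icc 1 N, ∀ j ∈ Finset.Icc 1 N, ∀ a b : ℕ,
      (a = i ∨ a = i + N) → (b = j ∨ b = j + N) → 0 < p a b → 0 < p i j) :
    ∀ σ τ : List ℕ, (∀ x ∈ σ, x ∈ Finset.Icc 1 N) → τ ∈ lifts N σ →
      τ.Chain' (edge p) → σ.Chain' (fun a b => 0 < p a b) := by
  intro σ
  induction σ with
  | nil => intro τ _ _ _; exact List.isChain_nil
  | cons i t ih =>
    intro τ hmem hτ hch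
    obtain ⟨l, hl, hor⟩ := mem_lifts_cons.1 hτ
    cases t with
    | nil => exact List.isChain_singleton i
    | cons j t' =>
      have hi : i ∈ Finset.Icc 1 N := hmem i (List.mem_cons_self)
      have hj : j ∈ Finset.Icc 1 N :=
        hmem j (List.mem_cons_of_mem _ (List.mem_cons_self))
      have hmem' : ∀ x ∈ j :: t', x ∈ Finset.Icc 1 N :=
        fun x hx => hmem x (List.mem_cons_of_mem _ hx)
      obtain ⟨l', hl', hor'⟩ := mem_lifts_cons.1 hl
      rcases hor' with rfl | rfl <;> rcases hor with rfl | rfl <;>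
      · obtain ⟨he, hc2⟩ := List.isChain_cons_cons.mp hch
        exact List.isChain_cons_cons.mpr
          ⟨hdown i hi j hj _ _ (by first | exact Or.inl rfl | exact Or.inr rfl)
            (by first | exact Or.inl rfl | exact Or.inr rfl) he,
           ih _ hmem' hl hc2⟩

/-- key induction: under the row-sum condition, `Gs` is a Markov product and does not
depend on the lift of the leading letter. -/
lemma Gs_eq {p : ℕ → ℕ → ℝ} {N : ℕ} (hN : 0 < N) (hp0 : ∀ i j, 0 ≤ p i j)
    (Heq : ∀ i ∈ Finset.Icc 1 N, ∀ j ∈ Finset.Icc 1 N, 0 < p i j →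
      p i j + p i (j + N) = p (i + N) j + p (i + N) (j + N)) :
    ∀ t : List ℕ, ∀ i ∈ Finset.Icc 1 N, (∀ x ∈ t, x ∈ Finset.Icc 1 N) →
      (i :: t).Chain' (fun a b => 0 < p a b) →
      Gs p N i t = pword (fun a b => p a b + p a (b + N)) (i :: t) ∧
        Gs p N (i + N) t = pword (fun a b => p a b + p a (b + N)) (i :: t) := by
  intro t
  induction t with
  | nil => intro i _ _ _; simp [Gs_nil]
  | cons j t' ih =>
    intro i hi hmem hch
    have hij : 0 < p i j := (List.isChain_cons_cons.mp hch).1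
    have hch' : (j :: t').Chain' (fun a b => 0 < p a b) := (List.isChain_cons_cons.mp hch).2
    have hj : j ∈ Finset.Icc 1 N := hmem j (List.mem_cons_self)
    obtain ⟨h1, h2⟩ := ih j hj (fun x hx => hmem x (List.mem_cons_of_mem _ hx)) hch'
    constructor
    · rw [Gs_cons hN hp0, h1, h2, pword_cons]; ring
    · rw [Gs_cons hN hp0, h1, h2, pword_cons, Heq i hi j hj hij]; ring

lemma pword_nonneg {q : ℕ → ℕ → ℝ} {S : ℕ → Prop} (hq : ∀ a b, S a → S b → 0 ≤ q a b) :
    ∀ σ : List ℕ, (∀ x ∈ σ, S x) → 0 ≤ pword q σ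
  | [], _ => zero_le_one
  | [_], _ => zero_le_one
  | a :: b :: t, h =>
    mul_nonneg (hq a b (h a (List.mem_cons_self))
        (h b (List.mem_cons_of_mem _ (List.mem_cons_self))))
      (pword_nonneg hq (b :: t) fun x hx => h x (List.mem_cons_of_mem _ hx))

lemma sum_Icc_two {N : ℕ} (f : ℕ → ℝ) :
    ∑ j ∈ Finset.Icc 1 (2 * N), f j = ∑ j ∈ Finset.Icc 1 N, (f j + f (j + N)) := by
  have h1 : Finset.Icc 1 (2 * N) = Finset.Ioc 0 (2 * N) := by
    rw [← Finset.Icc_add_one_left_eq_Ioc, zero_add]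
  have h2 : Finset.Icc 1 N = Finset.Ioc 0 N := by rw [← Finset.Icc_add_one_left_eq_Ioc, zero_add]
  rw [h1, h2, Finset.sum_add_distrib,
    ← Finset.sum_Ioc_consecutive f (Nat.zero_le N) (by omega : N ≤ 2 * N)]
  congr 1
  apply Finset.sum_nbij' (fun j => j - N) (fun j => j + N)
  · intro a ha; simp only [Finset.mem_Ioc] at ha ⊢; omega
  · intro a ha; simp only [Finset.mem_Ioc] at ha ⊢; omega
  · intro a ha; simp only [Finset.mem_Ioc] at ha; omega
  · intro a ha; omega
  · intro a ha; simp only [Finset.mem_Ioc] at ha; congr 1; omega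


lemma muJ_nonneg {p : ℕ → ℕ → ℝ} {χ : ℕ → ℝ} {N : ℕ} (hp0 : ∀ i j, 0 ≤ p i j)
    (hχ : ∀ i ∈ Finset.Icc 1 (2 * N), 0 ≤ χ i) {σ : List ℕ} (hσ : isPsiWord N σ) :
    0 ≤ muJ p χ N σ := by
  obtain ⟨hne, hmem⟩ := hσ
  refine Finset.sum_nonneg fun τ hτ => ?_
  have hτl : τ ∈ lifts N σ := (Finset.mem_filter.mp hτ).1
  have hpw : 0 ≤ pword p τ :=
    pword_nonneg (S := fun _ => True) (fun a b _ _ => hp0 a b) τ (fun _ _ => trivial)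
  cases σ with
  | nil => exact absurd rfl hne
  | cons a t =>
      obtain ⟨l, -, hor⟩ := mem_lifts_cons.1 hτl
      have ha := hmem a (List.mem_cons_self)
      rw [Finset.mem_Icc] at ha
      have hh : 0 ≤ χ (τ.headD 0) := by
        rcases hor with rfl | rfl <;>
        · simp only [List.headD_cons]
          exact hχ _ (by rw [Finset.mem_Icc]; omega)
      exact mul_nonneg hh hpw

/-- **Corollary 2.3.** Assume (A2), (A4), (A5), and (b1) `χ_i = χ_{i⁺}` for every `i ∈ Ψ`,
(b2) for every `i ∈ Ψ` there is `l ∈ Ψ` with `p_{l,i} + p_{l⁺,i} ≠ p_{l,i⁺} + p_{l⁺,i⁺}`.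
Then `μ` is reducible iff `p_{i,j} + p_{i,j⁺} = p_{i⁺,j} + p_{i⁺,j⁺}` for all `(i,j) ∈ 𝒮₂`. -/
theorem stmt2
    (N q : ℕ) (hN : 2 ≤ N) (hq : 1 ≤ q) (r : ℝ) (hr : 0 < r)
    (p : ℕ → ℕ → ℝ) (χ : ℕ → ℝ)
    (hp0 : ∀ i j, 0 ≤ p i j)
    (hpsupp : ∀ i j, 0 < p i j → i ∈ Finset.Icc 1 (2 * N) ∧ j ∈ Finset.Icc 1 (2 * N))
    (hpsum : ∀ i ∈ Finset.Icc 1 (2 * N), ∑ j ∈ Finset.Icc 1 (2 * N), p i j = 1)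
    (hχpos : ∀ i ∈ Finset.Icc 1 (2 * N), 0 < χ i)
    (hχsum : ∑ i ∈ Finset.Icc 1 (2 * N), χ i = 1)
    (sr : ℕ → ℕ → ℝ)
    (T : ℕ → ℕ → EuclideanSpace ℝ (Fin q) → EuclideanSpace ℝ (Fin q))
    (J : ℕ → Set (EuclideanSpace ℝ (Fin q)))
    (hTinv : ∀ i ∈ Finset.Icc 1 N, ∀ j ∈ Finset.Icc 1 N, ∀ a b : ℕ,
      (a = i ∨ a = i + N) → (b = j ∨ b = j + N) → 0 < p a b →
      T a b = T i j ∧ sr a b = sr i j)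
    (hsim : ∀ i ∈ Finset.Icc 1 N, ∀ j ∈ Finset.Icc 1 N, isSword p N [i, j] →
      0 < sr i j ∧ sr i j < 1 ∧ ∀ x y, dist (T i j x) (T i j y) = sr i j * dist x y)
    (hJcpt : ∀ i ∈ Finset.Icc 1 N,
      IsCompact (J i) ∧ (J i).Nonempty ∧ closure (interior (J i)) = J i ∧
        Metric.diam (J i) = 1)
    (hJdisj : ∀ i ∈ Finset.Icc 1 N, ∀ j ∈ Finset.Icc 1 N, i ≠ j → Disjoint (J i) (J j))
    (hJplus : ∀ i ∈ Finset.Icc 1 N, J (i + N) = J i)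
    (hnest : ∀ i ∈ Finset.Icc 1 N, ∀ j ∈ Finset.Icc 1 N, isSword p N [i, j] →
      T i j '' J j ⊆ J i)
    (hTdisj : ∀ i ∈ Finset.Icc 1 N, ∀ j ∈ Finset.Icc 1 N, ∀ l ∈ Finset.Icc 1 N,
      isSword p N [i, j] → isSword p N [i, l] → j ≠ l →
      Disjoint (T i j '' J j) (T i l '' J l))
    (μ : Measure (EuclideanSpace ℝ (Fin q))) [IsProbabilityMeasure μ]
    (hμ : ∀ σ : List ℕ, isSword p N σ →
      μ (Jword T J σ) = ENNReal.ofReal (muJ p χ N σ))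
    (hA2 : A2 p N) (hA4 : A4 p N) (hA5 : A5 p N)
    (hb1 : ∀ i ∈ Finset.Icc 1 N, χ i = χ (i + N))
    (hb2 : ∀ i ∈ Finset.Icc 1 N, ∃ l ∈ Finset.Icc 1 N,
      p l i + p (l + N) i ≠ p l (i + N) + p (l + N) (i + N)) :
    reducible p N T J μ ↔
      ∀ i ∈ Finset.Icc 1 N, ∀ j ∈ Finset.Icc 1 N, isSword p N [i, j] →
        p i j + p i (j + N) = p (i + N) j + p (i + N) (j + N) := by
  have hN0 : 0 < N := by omega
  have hdown : ∀ i ∈ Finset.Icc 1 N, ∀ j ∈ Finset.Icc 1 N, ∀ a b : ℕ,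
      (a = i ∨ a = i + N) → (b = j ∨ b = j + N) → 0 < p a b → 0 < p i j := by
    intro i hi j hj a b ha hb hpos
    rcases hA4 i hi j hj with ⟨h1, h2, h3, h4⟩ | ⟨h1, _, _, _⟩
    · exfalso; rcases ha with rfl | rfl <;> rcases hb with rfl | rfl <;> linarith
    · exact h1
  have memΩ : ∀ i ∈ Finset.Icc 1 N,
      i ∈ Finset.Icc 1 (2 * N) ∧ i + N ∈ Finset.Icc 1 (2 * N) := by
    intro i hi
    rw [Finset.mem_Icc] at hi
    constructor <;> (rw [Finset.mem_Icc]; omega)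
  constructor
  · rintro ⟨pt, χt, hq0, hrow, hχp, hχs, hcyl⟩ i hi j hj hij
    obtain ⟨⟨hneij, hmemij⟩, τ0, hτ0⟩ := hij
    have hτ0' := Finset.mem_filter.mp hτ0
    have hchainij := chain_of_lift hdown [i, j] τ0 hmemij hτ0'.1 hτ0'.2
    have hpij : 0 < p i j := (List.isChain_cons_cons.mp hchainij).1
    obtain ⟨l, hl, hlneq⟩ := hb2 i hi
    have hpli : 0 < p l i := by
      rcases hA4 l hl i hi with ⟨h1, h2, h3, h4⟩ | ⟨h1, _, _, _⟩
      · exact absurd (by rw [h1, h2, h3, h4]) hlneq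
      · exact h1
    have hmli : ∀ x ∈ ([l, i] : List ℕ), x ∈ Finset.Icc 1 N := by
      intro x hx
      simp only [List.mem_cons, List.not_mem_nil, or_false] at hx
      rcases hx with rfl | rfl
      exacts [hl, hi]
    have hmlij : ∀ x ∈ ([l, i, j] : List ℕ), x ∈ Finset.Icc 1 N := by
      intro x hx
      simp only [List.mem_cons, List.not_mem_nil, or_false] at hx
      rcases hx with rfl | rfl | rfl
      exacts [hl, hi, hj]
    have hm1 : ∀ x ∈ ([i] : List ℕ), x ∈ Finset.Icc 1 N := by
      intro x hx
      simp only [List.mem_cons, List.not_mem_nil, or_false] at hx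
      subst hx; exact hi
    have hchij : ([i, j] : List ℕ).Chain' (edge p) :=
      List.isChain_cons_cons.mpr ⟨hpij, List.isChain_singleton j⟩
    have hchli : ([l, i] : List ℕ).Chain' (edge p) :=
      List.isChain_cons_cons.mpr ⟨hpli, List.isChain_singleton i⟩
    have hchlij : ([l, i, j] : List ℕ).Chain' (edge p) :=
      List.isChain_cons_cons.mpr ⟨hpli, hchij⟩
    have hSi : isSword p N [i] := isSword_mk (by simp) hm1 (List.isChain_singleton i)
    have hSij : isSword p N [i, j] := isSword_mk (by simp) hmemij hchij
    have hSli : isSword p N [l, i] := isSword_mk (by simp) hmli hchli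
    have hSlij : isSword p N [l, i, j] := isSword_mk (by simp) hmlij hchlij
    have hχi : 0 < χ i := hχpos i (memΩ i hi).1
    have hχl : 0 < χ l := hχpos l (memΩ l hl).1
    have hbi : χ (i + N) = χ i := (hb1 i hi).symm
    have hbl : χ (l + N) = χ l := (hb1 l hl).symm
    have key : ∀ σ : List ℕ, isSword p N σ → muJ p χ N σ = χt (σ.headD 0) * pword pt σ := by
      intro σ hσ
      have h1 := (hμ σ hσ).symm.trans (hcyl σ hσ)
      have hA : 0 ≤ muJ p χ N σ :=
        muJ_nonneg hp0 (fun a ha => le_of_lt (hχpos a ha)) hσ.1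
      have hhead : σ.headD 0 ∈ Finset.Icc 1 N := by
        obtain ⟨hne, hmem⟩ := hσ.1
        cases σ with
        | nil => exact absurd rfl hne
        | cons a t => exact hmem a (List.mem_cons_self)
      have hB : 0 ≤ χt (σ.headD 0) * pword pt σ :=
        mul_nonneg (le_of_lt (hχp _ hhead))
          (pword_nonneg (S := fun x => x ∈ Finset.Icc 1 N)
            (fun a b ha hb => hq0 a ha b hb) σ hσ.1.2)
      have h2 := congrArg ENNReal.toReal h1
      rwa [ENNReal.toReal_ofReal hA, ENNReal.toReal_ofReal hB] at h2
    -- the three cylinder equations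
    have h1i := key [i] hSi
    have m1i : muJ p χ N [i] = χ i + χ i := by
      rw [muJ_cons hN0, Gs_nil, Gs_nil, hbi]; ring
    rw [m1i] at h1i
    simp only [List.headD_cons, pword_single, mul_one] at h1i
    have h1l := key [l] (isSword_mk (by simp)
      (by intro x hx
          simp only [List.mem_cons, List.not_mem_nil, or_false] at hx
          subst hx; exact hl)
      (List.isChain_singleton l))
    have m1l : muJ p χ N [l] = χ l + χ l := by
      rw [muJ_cons hN0, Gs_nil, Gs_nil, hbl]; ring
    rw [m1l] at h1l
    simp only [List.headD_cons, pword_single, mul_one] at h1l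
    have h2ij := key [i, j] hSij
    have m2ij : muJ p χ N [i, j] =
        χ i * (p i j + p i (j + N)) + χ i * (p (i + N) j + p (i + N) (j + N)) := by
      simp only [muJ_cons hN0, Gs_cons hN0 hp0, Gs_nil]
      rw [hbi]; ring
    rw [m2ij] at h2ij
    simp only [List.headD_cons, pword_cons, pword_single, mul_one] at h2ij
    rw [← h1i] at h2ij
    have h2li := key [l, i] hSli
    have m2li : muJ p χ N [l, i] =
        χ l * (p l i + p l (i + N)) + χ l * (p (l + N) i + p (l + N) (i + N)) := by
      simp only [muJ_cons hN0, Gs_cons hN0 hp0, Gs_nil]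
      rw [hbl]; ring
    rw [m2li] at h2li
    simp only [List.headD_cons, pword_cons, pword_single, mul_one] at h2li
    rw [← h1l] at h2li
    have h3 := key [l, i, j] hSlij
    have m3 : muJ p χ N [l, i, j] =
        χ l * (p l i * (p i j + p i (j + N)) + p l (i + N) * (p (i + N) j + p (i + N) (j + N)))
          + χ l * (p (l + N) i * (p i j + p i (j + N))
            + p (l + N) (i + N) * (p (i + N) j + p (i + N) (j + N))) := by
      simp only [muJ_cons hN0, Gs_cons hN0 hp0, Gs_nil]
      rw [hbl]; ring
    rw [m3] at h3
    simp only [List.headD_cons, pword_cons, pword_single, mul_one] at h3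
    rw [← h1l] at h3
    -- cancel χ i resp. χ l
    have hptij : 2 * pt i j =
        (p i j + p i (j + N)) + (p (i + N) j + p (i + N) (j + N)) :=
      mul_left_cancel₀ (ne_of_gt hχi) (by linear_combination - h2ij)
    have hptli : 2 * pt l i =
        (p l i + p l (i + N)) + (p (l + N) i + p (l + N) (i + N)) :=
      mul_left_cancel₀ (ne_of_gt hχl) (by linear_combination - h2li)
    have hprod : 2 * (pt l i * pt i j) =
        p l i * (p i j + p i (j + N)) + p l (i + N) * (p (i + N) j + p (i + N) (j + N))
          + p (l + N) i * (p i j + p i (j + N))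
          + p (l + N) (i + N) * (p (i + N) j + p (i + N) (j + N)) :=
      mul_left_cancel₀ (ne_of_gt hχl) (by linear_combination - h3)
    have hz : ((p l i + p (l + N) i) - (p l (i + N) + p (l + N) (i + N))) *
        ((p i j + p i (j + N)) - (p (i + N) j + p (i + N) (j + N))) = 0 := by
      linear_combination
        ((p i j + p i (j + N)) + (p (i + N) j + p (i + N) (j + N))) * hptli
          + (2 * pt l i) * hptij - 2 * hprod
    rcases mul_eq_zero.mp hz with h | h
    · exact absurd (sub_eq_zero.mp h) hlneq
    · exact sub_eq_zero.mp h
  · intro hcond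
    have Heq : ∀ i ∈ Finset.Icc 1 N, ∀ j ∈ Finset.Icc 1 N, 0 < p i j →
        p i j + p i (j + N) = p (i + N) j + p (i + N) (j + N) := by
      intro i hi j hj h
      refine hcond i hi j hj (isSword_mk (by simp) ?_
        (List.isChain_cons_cons.mpr ⟨h, List.isChain_singleton j⟩))
      intro x hx
      simp only [List.mem_cons, List.not_mem_nil, or_false] at hx
      rcases hx with rfl | rfl
      exacts [hi, hj]
    refine ⟨fun a b => p a b + p a (b + N), fun a => χ a + χ (a + N), ?_, ?_, ?_, ?_, ?_⟩
    · intro a _ b _; exact add_nonneg (hp0 a b) (hp0 a (b + N))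
    · intro a ha
      exact (sum_Icc_two (fun j => p a j)).symm.trans (hpsum a (memΩ a ha).1)
    · intro a ha
      exact add_pos (hχpos a (memΩ a ha).1) (hχpos (a + N) (memΩ a ha).2)
    · exact (sum_Icc_two χ).symm.trans hχsum
    · intro σ hσ
      rw [hμ σ hσ]
      congr 1
      obtain ⟨⟨hne, hmem⟩, τ, hτ⟩ := hσ
      have hτ' := Finset.mem_filter.mp hτ
      cases σ with
      | nil => exact absurd rfl hne
      | cons a t =>
        have hch := chain_of_lift hdown (a :: t) τ hmem hτ'.1 hτ'.2
        have ha : a ∈ Finset.Icc 1 N := hmem a (List.mem_cons_self)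
        obtain ⟨g1, g2⟩ := Gs_eq hN0 hp0 Heq t a ha
          (fun x hx => hmem x (List.mem_cons_of_mem _ hx)) hch
        show muJ p χ N (a :: t) =
          (χ a + χ (a + N)) * pword (fun a b => p a b + p a (b + N)) (a :: t)
        rw [muJ_cons hN0, g1, g2]
        ring


end MTM

end
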